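/- For any positive integer n and pairwise distinct real numbers ζ₁, …, ζₙ and any real g₀ such that all denominators are nonzero, the identity ∑_{j=1}^n ∏_{k ≠ j} (1 + g₀/(ζ_j − ζ_k)) = n holds. -/

import Mathlib

open Finset

open Polynomial in
/-- For pairwise distinct ζ₁,…,ζₙ, `∑_j ∏_{k ≠ j} (1 + g₀/(ζ_j − ζ_k)) = n`. -/
theorem stmt3 (n : ℕ) (hn : 0 < n) (ζ : Fin n → ℝ) (g₀ : ℝ)
    (hζ : Function.Injective ζ) :
    ∑ j : Fin n, ∏ k ∈ Finset.univ.erase j, (1 + g₀ / (ζ j - ζ k)) = n := by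
  rcases eq_or_ne g₀ 0 with rfl | hg
  · simp
  have hsub : ∀ {j k : Fin n}, k ∈ (univ : Finset (Fin n)).erase j → ζ j - ζ k ≠ 0 := by
    intro j k hk
    exact sub_ne_zero.mpr fun h => (Finset.mem_erase.mp hk).1 (hζ h.symm)
  set p : ℝ[X] := ∏ k : Fin n, (X - C (ζ k - g₀)) with hp
  set q : ℝ[X] := ∏ k : Fin n, (X - C (ζ k)) with hq
  have hpm : p.Monic := monic_prod_of_monic _ _ fun k _ => monic_X_sub_C _
  have hqm : q.Monic := monic_prod_of_monic _ _ fun k _ => monic_X_sub_C _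
  have hpd : p.natDegree = n := by
    rw [hp, natDegree_prod_of_monic _ _ fun k _ => monic_X_sub_C _]
    simp only [natDegree_X_sub_C, Finset.sum_const, card_univ, Fintype.card_fin, smul_eq_mul,
      mul_one]
  have hqd : q.natDegree = n := by
    rw [hq, natDegree_prod_of_monic _ _ fun k _ => monic_X_sub_C _]
    simp only [natDegree_X_sub_C, Finset.sum_const, card_univ, Fintype.card_fin, smul_eq_mul,
      mul_one]
  set f : ℝ[X] := p - q with hf
  have hdeg : f.degree < (#(univ : Finset (Fin n)) : ℕ) := by
    have h1 : p.degree = q.degree := by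
      rw [degree_eq_natDegree hpm.ne_zero, degree_eq_natDegree hqm.ne_zero, hpd, hqd]
    have := degree_sub_lt h1 hpm.ne_zero (by rw [hpm.leadingCoeff, hqm.leadingCoeff])
    rw [degree_eq_natDegree hpm.ne_zero, hpd] at this
    simpa using this
  have key := Lagrange.eq_interpolate (v := ζ) (s := univ) hζ.injOn hdeg
  -- take coefficient n-1
  have hcoeff : f.coeff (n - 1) = n * g₀ := by
    have h1 := prod_X_sub_C_coeff_card_pred (univ : Finset (Fin n)) (fun k => ζ k - g₀)
      (by simpa using hn)
    have h2 := prod_X_sub_C_coeff_card_pred (univ : Finset (Fin n)) (fun k => ζ k)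
      (by simpa using hn)
    simp only [card_univ, Fintype.card_fin] at h1 h2
    rw [hf, coeff_sub, ← hp, ← hq] at *
    rw [h1, h2, Finset.sum_sub_distrib]
    simp [mul_comm]
  -- coefficient of basis polynomial
  have hbasis : ∀ j : Fin n, (Lagrange.basis univ ζ j).coeff (n - 1)
      = ∏ k ∈ univ.erase j, (ζ j - ζ k)⁻¹ := by
    intro j
    have hcard : #(univ.erase j) = n - 1 := by simp
    have : Lagrange.basis univ ζ j
        = C (∏ k ∈ univ.erase j, (ζ j - ζ k)⁻¹) * ∏ k ∈ univ.erase j, (X - C (ζ k)) := by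
      rw [Lagrange.basis]
      simp_rw [Lagrange.basisDivisor]
      rw [Finset.prod_mul_distrib, map_prod]
    rw [this, coeff_C_mul]
    have hm : (∏ k ∈ univ.erase j, (X - C (ζ k))).Monic :=
      monic_prod_of_monic _ _ fun k _ => monic_X_sub_C _
    have hd : (∏ k ∈ univ.erase j, (X - C (ζ k))).natDegree = n - 1 := by
      rw [natDegree_prod_of_monic _ _ fun k _ => monic_X_sub_C _]
      simp [hcard]
    rw [← hd, hm.coeff_natDegree, mul_one]
  have heval : ∀ j : Fin n, f.eval (ζ j) = g₀ * ∏ k ∈ univ.erase j, (ζ j - ζ k + g₀) := by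
    intro j
    have hq0 : q.eval (ζ j) = 0 := by
      rw [hq, eval_prod]
      exact Finset.prod_eq_zero (Finset.mem_univ j) (by simp)
    rw [hf, eval_sub, hq0, sub_zero, hp, eval_prod]
    rw [← Finset.mul_prod_erase univ _ (Finset.mem_univ j)]
    simp only [eval_sub, eval_X, eval_C]
    rw [show ζ j - (ζ j - g₀) = g₀ by ring]
    congr 1
    exact Finset.prod_congr rfl fun k _ => by ring
  -- put together
  have hmain : (n : ℝ) * g₀
      = ∑ j : Fin n, (g₀ * ∏ k ∈ univ.erase j, (ζ j - ζ k + g₀))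
          * ∏ k ∈ univ.erase j, (ζ j - ζ k)⁻¹ := by
    calc (n : ℝ) * g₀ = f.coeff (n - 1) := hcoeff.symm
    _ = (Lagrange.interpolate univ ζ fun i => f.eval (ζ i)).coeff (n - 1) := by rw [← key]
    _ = _ := by
        rw [Lagrange.interpolate_apply, finset_sum_coeff]
        exact Finset.sum_congr rfl fun j _ => by rw [coeff_C_mul, hbasis j, heval j]
  have hprod : ∀ j : Fin n, ∏ k ∈ univ.erase j, (1 + g₀ / (ζ j - ζ k))
      = (∏ k ∈ univ.erase j, (ζ j - ζ k + g₀)) * ∏ k ∈ univ.erase j, (ζ j - ζ k)⁻¹ := by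
    intro j
    rw [← Finset.prod_mul_distrib]
    refine Finset.prod_congr rfl fun k hk => ?_
    have := hsub hk
    field_simp
  have hfin : g₀ * ∑ j : Fin n, ∏ k ∈ univ.erase j, (1 + g₀ / (ζ j - ζ k)) = g₀ * n := by
    rw [Finset.mul_sum]
    calc ∑ j : Fin n, g₀ * ∏ k ∈ univ.erase j, (1 + g₀ / (ζ j - ζ k))
        = ∑ j : Fin n, (g₀ * ∏ k ∈ univ.erase j, (ζ j - ζ k + g₀))
            * ∏ k ∈ univ.erase j, (ζ j - ζ k)⁻¹ :=
          Finset.sum_congr rfl fun j _ => by rw [hprod j]; ring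
      _ = (n : ℝ) * g₀ := hmain.symm
      _ = g₀ * n := mul_comm _ _
  exact mul_left_cancel₀ hg hfin
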